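/- For every x ∈ (0,c₁max), the function g₁ has a right derivative at x, given by g₁'₊(x) = ((ζ'₊(x) − 1)/(ζ(x) − x − β)) · (H'(x) − g₁(x)), where ζ'₊(x) denotes the right derivative of ζ at x. Consequently, at any x ∈ (0,c₁max): g₁'₊(x) < 0 if and only if g₁(x) < H'(x); g₁'₊(x) > 0 if and only if g₁(x) > H'(x); and g₁'₊(x) = 0 if and only if g₁(x) = H'(x). -/

import Mathlib

open Set Filter Topology

theorem stmt_8
    (H H' : ℝ → ℝ)
    (hHcont : ContinuousOn H (Set.Ici 0))
    (hHderiv : ∀ x ∈ Set.Ioi (0:ℝ), HasDerivAt H (H' x) x)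
    (hH'pos : ∀ x ∈ Set.Ioi (0:ℝ), 0 < H' x)
    (hH'cont : ContinuousOn H' (Set.Ici 0))
    (hH'top : Filter.Tendsto H' Filter.atTop Filter.atTop)
    (β : ℝ) (hβ : 0 < β)
    (astar : ℝ) (hastar : 0 ≤ astar)
    (hH'dec : StrictAntiOn H' (Set.Ioo 0 astar))
    (hH'inc : StrictMonoOn H' (Set.Ioi astar))
    (hH'conv : ConvexOn ℝ (Set.Ioi 0) H')
    (hastar0 : 0 < astar)
    (ζ : ℝ → ℝ)
    (hζ : ∀ x ∈ Set.Ioo 0 astar, ζ x ∈ Set.Ioi astar ∧ H' (ζ x) = H' x)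
    (c1max : ℝ)
    (hc1max₁ : (∃ x ∈ Set.Ioo 0 astar, ζ x - x ≤ β) →
      c1max = sInf {x | x ∈ Set.Ioo 0 astar ∧ ζ x - x ≤ β})
    (hc1max₂ : (¬ ∃ x ∈ Set.Ioo 0 astar, ζ x - x ≤ β) → c1max = astar)
    (g₁ : ℝ → ℝ) (hg₁ : ∀ x, g₁ x = (H (ζ x) - H x) / (ζ x - x - β))
    :
    ∀ x ∈ Set.Ioo 0 c1max, ∃ zd : ℝ,
      HasDerivWithinAt ζ zd (Set.Ici x) x ∧
      HasDerivWithinAt g₁ ((zd - 1) / (ζ x - x - β) * (H' x - g₁ x)) (Set.Ici x) x ∧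
      ((zd - 1) / (ζ x - x - β) * (H' x - g₁ x) < 0 ↔ g₁ x < H' x) ∧
      (0 < (zd - 1) / (ζ x - x - β) * (H' x - g₁ x) ↔ H' x < g₁ x) ∧
      ((zd - 1) / (ζ x - x - β) * (H' x - g₁ x) = 0 ↔ g₁ x = H' x) := by
  intro x hx
  obtain ⟨hx0, hxc⟩ := hx
  have hSbdd : BddBelow {x | x ∈ Set.Ioo 0 astar ∧ ζ x - x ≤ β} :=
    ⟨0, fun y hy => hy.1.1.le⟩
  have hxa : x < astar := by
    by_cases h : ∃ y ∈ Set.Ioo 0 astar, ζ y - y ≤ β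
    · obtain ⟨s, hs1, hs2⟩ := h
      have h1 := hc1max₁ ⟨s, hs1, hs2⟩
      have h2 : c1max ≤ s := h1 ▸ csInf_le hSbdd ⟨hs1, hs2⟩
      exact (hxc.trans_le h2).trans hs1.2
    · rw [hc1max₂ h] at hxc; exact hxc
  have hxI : x ∈ Set.Ioo 0 astar := ⟨hx0, hxa⟩
  obtain ⟨hbI, hbH⟩ := hζ x hxI
  have hb0 : (0:ℝ) < ζ x := hastar0.trans hbI
  -- ζ is strictly decreasing
  have hζanti : ∀ y ∈ Set.Ioo 0 astar, ∀ z ∈ Set.Ioo 0 astar, y < z → ζ z < ζ y := by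
    intro y hy z hz hyz
    obtain ⟨hy1, hy2⟩ := hζ y hy
    obtain ⟨hz1, hz2⟩ := hζ z hz
    have h1 : H' (ζ z) < H' (ζ y) := by rw [hy2, hz2]; exact hH'dec hy hz hyz
    by_contra hcon
    push_neg at hcon
    exact absurd (hH'inc.monotoneOn hy1 hz1 hcon) (not_le.2 h1)
  -- denominator positive
  have hD : β < ζ x - x := by
    by_contra h
    push_neg at h
    have h1 := hc1max₁ ⟨x, hxI, h⟩
    have h2 : c1max ≤ x := h1 ▸ csInf_le hSbdd ⟨hxI, h⟩
    linarith
  have hd : 0 < ζ x - x - β := by linarith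
  have hdne : ζ x - x - β ≠ 0 := ne_of_gt hd
  -- right slope limit of H' at x
  have hmono := hH'conv.slope_mono (show x ∈ Set.Ioi 0 from hx0)
  have hsub : Set.Ioo x astar ⊆ Set.Ioi 0 \ {x} := fun y hy =>
    ⟨hx0.trans hy.1, fun h => absurd (Set.mem_singleton_iff.1 h) (ne_of_gt hy.1)⟩
  have hIoo : (Set.Ioo x astar).Nonempty := ⟨(x + astar) / 2, ⟨by linarith, by linarith⟩⟩
  have hmem : ∀ y ∈ Set.Ioo x astar, y ∈ Set.Ioo 0 astar := fun y hy => ⟨hx0.trans hy.1, hy.2⟩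
  have hhalf : x / 2 ∈ Set.Ioi 0 \ {x} :=
    ⟨by simp; linarith, fun h => by simp at h; linarith⟩
  have hbddb : BddBelow (slope H' x '' Set.Ioo x astar) := by
    refine ⟨slope H' x (x / 2), ?_⟩
    rintro _ ⟨y, hy, rfl⟩
    exact hmono hhalf (hsub hy) (by linarith [hy.1])
  have hptend : Filter.Tendsto (slope H' x) (nhdsWithin x (Set.Ioi x))
      (nhds (sInf (slope H' x '' Set.Ioo x astar))) :=
    MonotoneOn.tendsto_nhdsWithin_Ioo_right hIoo (hmono.mono hsub) hbddb
  set p := sInf (slope H' x '' Set.Ioo x astar) with hpdef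
  have hy0 : (x + astar) / 2 ∈ Set.Ioo x astar := ⟨by linarith, by linarith⟩
  have hp : p < 0 := by
    have h1 : p ≤ slope H' x ((x + astar) / 2) := csInf_le hbddb ⟨_, hy0, rfl⟩
    have h2 : slope H' x ((x + astar) / 2) < 0 := by
      rw [slope_def_field]
      apply div_neg_of_neg_of_pos
      · have := hH'dec hxI ⟨by linarith, by linarith⟩ (by linarith : x < (x + astar) / 2)
        linarith
      · linarith
    linarith
  -- left slope limit of H' at ζ x
  have hmonob := hH'conv.slope_mono (show ζ x ∈ Set.Ioi 0 from hb0)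
  have hsub2 : Set.Ioo astar (ζ x) ⊆ Set.Ioi 0 \ {ζ x} := fun z hz =>
    ⟨hastar0.trans hz.1, fun h => absurd (Set.mem_singleton_iff.1 h) (ne_of_lt hz.2)⟩
  have hIoo2 : (Set.Ioo astar (ζ x)).Nonempty :=
    ⟨(astar + ζ x) / 2, ⟨by simp at hbI ⊢; linarith, by simp at hbI ⊢; linarith⟩⟩
  have hbp1 : ζ x + 1 ∈ Set.Ioi 0 \ {ζ x} :=
    ⟨by simp; linarith, fun h => by simp at h⟩
  have hbdda : BddAbove (slope H' (ζ x) '' Set.Ioo astar (ζ x)) := by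
    refine ⟨slope H' (ζ x) (ζ x + 1), ?_⟩
    rintro _ ⟨z, hz, rfl⟩
    exact hmonob (hsub2 hz) hbp1 (by linarith [hz.2])
  have hqtend : Filter.Tendsto (slope H' (ζ x)) (nhdsWithin (ζ x) (Set.Iio (ζ x)))
      (nhds (sSup (slope H' (ζ x) '' Set.Ioo astar (ζ x)))) :=
    MonotoneOn.tendsto_nhdsWithin_Ioo_left hIoo2 (hmonob.mono hsub2) hbdda
  set q := sSup (slope H' (ζ x) '' Set.Ioo astar (ζ x)) with hqdef
  have hab : astar < ζ x := hbI
  have hz0 : (astar + ζ x) / 2 ∈ Set.Ioo astar (ζ x) := ⟨by linarith, by linarith⟩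
  have hq : 0 < q := by
    have h1 : slope H' (ζ x) ((astar + ζ x) / 2) ≤ q := le_csSup hbdda ⟨_, hz0, rfl⟩
    have h2 : 0 < slope H' (ζ x) ((astar + ζ x) / 2) := by
      rw [slope_def_field]
      apply div_pos_of_neg_of_neg
      · have := hH'inc (show (astar + ζ x) / 2 ∈ Set.Ioi astar by simp; linarith) hbI
          (by linarith : (astar + ζ x) / 2 < ζ x)
        linarith
      · linarith
    linarith
  -- ζ tends to ζ x from the left, as y → x from the right
  have hζtend : Filter.Tendsto ζ (nhdsWithin x (Set.Ioi x))
      (nhdsWithin (ζ x) (Set.Iio (ζ x))) := by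
    rw [tendsto_nhdsWithin_iff]
    have hev2 : ∀ᶠ y in nhdsWithin x (Set.Ioi x), y ∈ Set.Ioo x astar :=
      Ioo_mem_nhdsGT hxa
    constructor
    · rw [Metric.tendsto_nhds]
      intro ε hε
      set b' := max ((astar + ζ x) / 2) (ζ x - ε / 2) with hb'def
      have hb'1 : astar < b' := lt_max_of_lt_left (by linarith)
      have hb'2 : b' < ζ x := max_lt (by linarith) (by linarith)
      have hb'3 : ζ x - ε / 2 ≤ b' := le_max_right _ _
      have hH'b' : H' b' < H' x := by
        rw [← hbH]; exact hH'inc hb'1 hbI hb'2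
      have hle : Set.Ioi x ⊆ Set.Ici (0:ℝ) := fun y hy => (hx0.trans hy).le
      have hc : ContinuousWithinAt H' (Set.Ici 0) x := hH'cont x hx0.le
      have hev1 : ∀ᶠ y in nhdsWithin x (Set.Ioi x), H' b' < H' y :=
        nhdsWithin_mono x hle (hc (Ioi_mem_nhds hH'b'))
      filter_upwards [hev1, hev2] with y h1 h2
      obtain ⟨hζy1, hζy2⟩ := hζ y (hmem y h2)
      have h3 : b' < ζ y := by
        by_contra hcon
        push_neg at hcon
        have := hH'inc.monotoneOn hζy1 (Set.mem_Ioi.2 hb'1) hcon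
        rw [hζy2] at this
        exact absurd this (not_le.2 h1)
      have h4 : ζ y < ζ x := hζanti x hxI y (hmem y h2) h2.1
      rw [Real.dist_eq, abs_lt]
      constructor <;> linarith
    · filter_upwards [hev2] with y h2
      exact hζanti x hxI y (hmem y h2) h2.1
  -- slope of ζ converges
  have hcomp : Filter.Tendsto (fun y => slope H' (ζ x) (ζ y)) (nhdsWithin x (Set.Ioi x))
      (nhds q) := hqtend.comp hζtend
  have hdivt : Filter.Tendsto (fun y => slope H' x y / slope H' (ζ x) (ζ y))
      (nhdsWithin x (Set.Ioi x)) (nhds (p / q)) := hptend.div hcomp (ne_of_gt hq)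
  have heq : (fun y => slope H' x y / slope H' (ζ x) (ζ y))
      =ᶠ[nhdsWithin x (Set.Ioi x)] slope ζ x := by
    filter_upwards [Ioo_mem_nhdsGT hxa] with y hy
    obtain ⟨hζy1, hζy2⟩ := hζ y (hmem y hy)
    have h4 : ζ y < ζ x := hζanti x hxI y (hmem y hy) hy.1
    have h5 : H' y < H' x := hH'dec hxI (hmem y hy) hy.1
    simp only [slope_def_field]
    rw [hζy2, hbH]
    have e1 : H' y - H' x ≠ 0 := by linarith
    have e2 : y - x ≠ 0 := sub_ne_zero.2 hy.1.ne'
    have e3 : ζ y - ζ x ≠ 0 := sub_ne_zero.2 (ne_of_lt h4)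
    field_simp
  have hζd : HasDerivWithinAt ζ (p / q) (Set.Ici x) x := by
    rw [hasDerivWithinAt_iff_tendsto_slope, Set.Ici_sdiff_left]
    exact hdivt.congr' heq
  set zd := p / q with hzddef
  have hzd : zd < 0 := div_neg_of_neg_of_pos hp hq
  -- derivative of g₁
  have hHb : HasDerivAt H (H' (ζ x)) (ζ x) := hHderiv (ζ x) hb0
  have hcompζ : HasDerivWithinAt (H ∘ ζ) (H' (ζ x) * zd) (Set.Ici x) x :=
    hHb.comp_hasDerivWithinAt x hζd
  have hHx : HasDerivAt H (H' x) x := hHderiv x hx0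
  have hN : HasDerivWithinAt (fun y => H (ζ y) - H y) (H' (ζ x) * zd - H' x)
      (Set.Ici x) x := hcompζ.sub hHx.hasDerivWithinAt
  have hDd : HasDerivWithinAt (fun y => ζ y - y - β) (zd - 1) (Set.Ici x) x := by
    simpa using (hζd.sub (hasDerivWithinAt_id x (Set.Ici x))).sub_const β
  have hdiv := hN.div hDd hdne
  have hg1d : HasDerivWithinAt g₁
      (((H' (ζ x) * zd - H' x) * (ζ x - x - β) - (H (ζ x) - H x) * (zd - 1)) /
        (ζ x - x - β) ^ 2) (Set.Ici x) x :=
    hdiv.congr (fun y _ => hg₁ y) (hg₁ x)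
  have hval : ((H' (ζ x) * zd - H' x) * (ζ x - x - β) - (H (ζ x) - H x) * (zd - 1)) /
      (ζ x - x - β) ^ 2 = (zd - 1) / (ζ x - x - β) * (H' x - g₁ x) := by
    rw [hg₁ x, hbH]
    field_simp
  have hcneg : (zd - 1) / (ζ x - x - β) < 0 := div_neg_of_neg_of_pos (by linarith) hd
  refine ⟨zd, hζd, hval ▸ hg1d, ?_, ?_, ?_⟩
  · rw [mul_neg_iff]
    constructor
    · rintro (⟨h1, _⟩ | ⟨_, h2⟩)
      · linarith
      · linarith
    · intro h; exact Or.inr ⟨hcneg, by linarith⟩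
  · rw [mul_pos_iff]
    constructor
    · rintro (⟨h1, _⟩ | ⟨_, h2⟩)
      · linarith
      · linarith
    · intro h; exact Or.inr ⟨hcneg, by linarith⟩
  · rw [mul_eq_zero]
    constructor
    · rintro (h | h)
      · exact absurd h (ne_of_lt hcneg)
      · linarith
    · intro h; exact Or.inr (by linarith)
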